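/- Let A be a commutative ring and f₁, …, f_n ∈ A[T₁, …, T_n] a regular sequence in the polynomial ring such that C := A[T]/(f₁, …, f_n) is a finite free A-module. Let γ_i ∈ C be the image of T_i, and suppose the kernel of A[T] ⊗_A C → C is generated by the regular sequence g_i = T_i ⊗ 1 − 1 ⊗ γ_i. Let λ : C → A be Tate's trace (the inverse image of 1 ∈ C under Tate's isomorphism Hom_A(C, A) ≅ C), and let J ∈ C be the image in C of the Jacobian determinant det(∂f_i/∂T_j). Then tr_{C/A}(c) = λ(J·c) for all c ∈ C. -/

import Mathlib

set_option synthInstance.maxHeartbeats 400000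
set_option maxHeartbeats 800000
open scoped TensorProduct

set_option maxHeartbeats 3200000 in
open RingTheory.Sequence Ideal in
lemma tate_syzygy {R : Type*} [CommRing R] :
    ∀ (n : ℕ) (g : Fin n → R), IsWeaklyRegular R (List.ofFn g) →
      ∀ v : Fin n → R, ∑ j, v j * g j = 0 → ∀ j, v j ∈ Ideal.span (Set.range g) := by
  intro n
  induction n with
  | zero => intro g _ v _ j; exact j.elim0
  | succ n ih =>
    intro g hg v hv j
    set g' : Fin n → R := Fin.init g with hg'
    have hsplit : List.ofFn g = List.ofFn g' ++ [g (Fin.last n)] := by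
      rw [List.ofFn_succ' g, List.concat_eq_append]; rfl
    rw [hsplit, isWeaklyRegular_append_iff] at hg
    obtain ⟨h1, h2⟩ := hg
    have hreg : IsSMulRegular (R ⧸ (Ideal.ofList (List.ofFn g') • ⊤ : Submodule R R))
        (g (Fin.last n)) := by
      rw [RingTheory.Sequence.isWeaklyRegular_singleton_iff] at h2; exact h2
    have hofList : Ideal.ofList (List.ofFn g') = Ideal.span (Set.range g') := by
      unfold Ideal.ofList
      congr 1
      ext x; simp [List.mem_ofFn, Set.mem_range]
    have hsum : ∑ j, v j * g j
        = (∑ j : Fin n, v j.castSucc * g' j) + v (Fin.last n) * g (Fin.last n) := by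
      rw [Fin.sum_univ_castSucc]; rfl
    rw [hsum] at hv
    have hmem : v (Fin.last n) * g (Fin.last n) ∈ Ideal.span (Set.range g') := by
      have heq : v (Fin.last n) * g (Fin.last n) = -(∑ j : Fin n, v j.castSucc * g' j) := by
        linear_combination hv
      rw [heq]
      exact neg_mem (Ideal.sum_mem _ fun j _ => Ideal.mul_mem_left _ _
        (Ideal.subset_span ⟨j, rfl⟩))
    have hKsmul : (Ideal.ofList (List.ofFn g') • ⊤ : Submodule R R)
        = (Ideal.span (Set.range g') : Ideal R) := by
      rw [hofList, smul_eq_mul, Ideal.mul_top]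
    have h0 : (Submodule.Quotient.mk (v (Fin.last n)) :
        R ⧸ (Ideal.ofList (List.ofFn g') • ⊤ : Submodule R R)) = 0 := by
      apply hreg
      show g (Fin.last n) • (Submodule.Quotient.mk (v (Fin.last n))) = g (Fin.last n) • (0:_)
      rw [smul_zero, ← Submodule.Quotient.mk_smul, Submodule.Quotient.mk_eq_zero, hKsmul]
      simpa [smul_eq_mul, mul_comm] using hmem
    rw [Submodule.Quotient.mk_eq_zero, hKsmul] at h0
    have hle : Ideal.span (Set.range g') ≤ Ideal.span (Set.range g) :=
      Ideal.span_mono (by rintro _ ⟨i, rfl⟩; exact ⟨i.castSucc, rfl⟩)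
    obtain ⟨c, hc⟩ := (Submodule.mem_span_range_iff_exists_fun R).mp h0
    have hw : ∀ i : Fin n, v i.castSucc + c i * g (Fin.last n) ∈ Ideal.span (Set.range g') := by
      apply ih g' h1
      have : ∑ i : Fin n, (v i.castSucc + c i * g (Fin.last n)) * g' i
          = (∑ i : Fin n, v i.castSucc * g' i)
            + (∑ i : Fin n, c i * g' i) * g (Fin.last n) := by
        rw [Finset.sum_mul, ← Finset.sum_add_distrib]
        congr 1; ext i; ring
      rw [this]
      have hc' : ∑ i : Fin n, c i * g' i = v (Fin.last n) := by
        simpa [smul_eq_mul] using hc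
      rw [hc']
      linear_combination hv
    refine Fin.lastCases ?_ ?_ j
    · exact hle h0
    · intro i
      have : v i.castSucc = (v i.castSucc + c i * g (Fin.last n)) - c i * g (Fin.last n) := by ring
      rw [this]
      exact sub_mem (hle (hw i))
        (Ideal.mul_mem_left _ _ (Ideal.subset_span ⟨Fin.last n, rfl⟩))

set_option maxHeartbeats 1600000 in
open RingTheory.Sequence in
lemma tate_det_sub_mem {R : Type*} [CommRing R] {n : ℕ} (g : Fin n → R)
    (hg : IsWeaklyRegular R (List.ofFn g)) (h h' : Matrix (Fin n) (Fin n) R)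
    (hrow : ∀ i, ∑ j, h i j * g j = ∑ j, h' i j * g j) :
    h.det - h'.det ∈ Ideal.span (Set.range g) := by
  have hent : ∀ i j, h i j - h' i j ∈ Ideal.span (Set.range g) := by
    intro i j
    refine tate_syzygy n g hg (fun j => h i j - h' i j) ?_ j
    have := hrow i
    simp only [sub_mul, Finset.sum_sub_distrib, this, sub_self]
  rw [← Ideal.Quotient.eq_zero_iff_mem, map_sub, sub_eq_zero,
    RingHom.map_det, RingHom.map_det]
  congr 1
  ext i j
  simp only [RingHom.mapMatrix_apply, Matrix.map_apply]
  rw [Ideal.Quotient.mk_eq_mk_iff_sub_mem]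
  exact hent i j


set_option maxHeartbeats 1600000 in
open RingTheory.Sequence in
lemma tate_taylor (A : Type*) [CommRing A] (n : ℕ)
    (I : Ideal (MvPolynomial (Fin n) A))
    (s : (MvPolynomial (Fin n) A) ⊗[A] (MvPolynomial (Fin n) A ⧸ I) →ₐ[A]
      (MvPolynomial (Fin n) A ⧸ I))
    (hs : ∀ (b : MvPolynomial (Fin n) A) (c : MvPolynomial (Fin n) A ⧸ I),
      s (b ⊗ₜ c) = Ideal.Quotient.mk I b * c)
    (g : Fin n → (MvPolynomial (Fin n) A) ⊗[A] (MvPolynomial (Fin n) A ⧸ I))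
    (hgdef : ∀ i, g i =
      (MvPolynomial.X i) ⊗ₜ[A] (1 : MvPolynomial (Fin n) A ⧸ I) -
        (1 : MvPolynomial (Fin n) A) ⊗ₜ[A] (Ideal.Quotient.mk I (MvPolynomial.X i)))
    (p : MvPolynomial (Fin n) A) :
    ∃ v : Fin n → (MvPolynomial (Fin n) A) ⊗[A] (MvPolynomial (Fin n) A ⧸ I),
      (p ⊗ₜ[A] (1 : MvPolynomial (Fin n) A ⧸ I) -
        (1 : MvPolynomial (Fin n) A) ⊗ₜ[A] (Ideal.Quotient.mk I p) = ∑ j, v j * g j) ∧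
      ∀ j, s (v j) = Ideal.Quotient.mk I (MvPolynomial.pderiv j p) := by
  induction p using MvPolynomial.induction_on with
  | C a =>
    refine ⟨0, ?_, ?_⟩
    · have l : (MvPolynomial.C a : MvPolynomial (Fin n) A) = a • 1 := by
        rw [← MvPolynomial.algebraMap_eq, Algebra.algebraMap_eq_smul_one]
      have r : Ideal.Quotient.mk I (MvPolynomial.C a) = a • (1 : MvPolynomial (Fin n) A ⧸ I) := by
        rw [← Algebra.algebraMap_eq_smul_one]; rfl
      have h1 : (MvPolynomial.C a : MvPolynomial (Fin n) A) ⊗ₜ[A]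
          (1 : MvPolynomial (Fin n) A ⧸ I) =
          (1 : MvPolynomial (Fin n) A) ⊗ₜ[A]
            (Ideal.Quotient.mk I (MvPolynomial.C a)) := by
        rw [r, l, TensorProduct.smul_tmul]
      rw [h1, sub_self]
      symm
      apply Finset.sum_eq_zero
      intro x _
      rw [Pi.zero_apply]
      ring
    · intro j; simp
  | add p q hp hq =>
    obtain ⟨v, hv1, hv2⟩ := hp
    obtain ⟨w, hw1, hw2⟩ := hq
    refine ⟨v + w, ?_, ?_⟩
    · have hvw : ∑ j : Fin n, (v + w) j * g j
          = (∑ j : Fin n, v j * g j) + ∑ j : Fin n, w j * g j := by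
        rw [← Finset.sum_add_distrib]
        exact Finset.sum_congr rfl fun j _ => by rw [Pi.add_apply]; ring
      rw [hvw, ← hv1, ← hw1, TensorProduct.add_tmul, map_add, TensorProduct.tmul_add]
      ring
    · intro j
      have hd : (MvPolynomial.pderiv j) (p + q)
          = (MvPolynomial.pderiv j) p + (MvPolynomial.pderiv j) q := map_add _ _ _
      rw [Pi.add_apply, map_add, hv2 j, hw2 j, hd, map_add]
  | mul_X p i hp =>
    obtain ⟨v, hv1, hv2⟩ := hp
    refine ⟨fun j => v j * (MvPolynomial.X i ⊗ₜ[A] (1 : MvPolynomial (Fin n) A ⧸ I)) +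
      if j = i then (1 : MvPolynomial (Fin n) A) ⊗ₜ[A] (Ideal.Quotient.mk I p) else 0,
      ?_, ?_⟩
    · have hsum : ∑ j, (v j * (MvPolynomial.X i ⊗ₜ[A] (1 : MvPolynomial (Fin n) A ⧸ I)) +
          if j = i then (1 : MvPolynomial (Fin n) A) ⊗ₜ[A] (Ideal.Quotient.mk I p) else 0)
            * g j
          = (∑ j, v j * g j) * (MvPolynomial.X i ⊗ₜ[A] (1 : MvPolynomial (Fin n) A ⧸ I))
            + ((1 : MvPolynomial (Fin n) A) ⊗ₜ[A] (Ideal.Quotient.mk I p)) * g i := by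
        have hterm : ∀ j, (v j * (MvPolynomial.X i ⊗ₜ[A] (1 : MvPolynomial (Fin n) A ⧸ I)) +
            if j = i then (1 : MvPolynomial (Fin n) A) ⊗ₜ[A] (Ideal.Quotient.mk I p) else 0)
              * g j
            = v j * g j * (MvPolynomial.X i ⊗ₜ[A] (1 : MvPolynomial (Fin n) A ⧸ I)) +
              if j = i then ((1 : MvPolynomial (Fin n) A) ⊗ₜ[A] (Ideal.Quotient.mk I p)) * g j
                else 0 := by
          intro j
          by_cases hji : j = i
          · rw [if_pos hji, if_pos hji]; ring
          · rw [if_neg hji, if_neg hji]; ring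
        rw [Finset.sum_congr rfl fun j _ => hterm j, Finset.sum_add_distrib]
        congr 1
        · with_unfolding_all exact
            (Finset.sum_mul Finset.univ (fun j => v j * g j)
              (MvPolynomial.X i ⊗ₜ[A] (1 : MvPolynomial (Fin n) A ⧸ I))).symm ▸ rfl
        · rw [Finset.sum_ite_eq' Finset.univ i
            (fun j => ((1 : MvPolynomial (Fin n) A) ⊗ₜ[A] (Ideal.Quotient.mk I p)) * g j),
            if_pos (Finset.mem_univ i)]
      rw [hsum, ← hv1, hgdef i]
      have e1 : (p * MvPolynomial.X i) ⊗ₜ[A] (1 : MvPolynomial (Fin n) A ⧸ I)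
          = (p ⊗ₜ[A] (1 : MvPolynomial (Fin n) A ⧸ I)) *
            (MvPolynomial.X i ⊗ₜ[A] (1 : MvPolynomial (Fin n) A ⧸ I)) := by
        rw [Algebra.TensorProduct.tmul_mul_tmul, mul_one]
      have e2 : (1 : MvPolynomial (Fin n) A) ⊗ₜ[A]
            (Ideal.Quotient.mk I (p * MvPolynomial.X i))
          = ((1 : MvPolynomial (Fin n) A) ⊗ₜ[A] (Ideal.Quotient.mk I p)) *
            ((1 : MvPolynomial (Fin n) A) ⊗ₜ[A] (Ideal.Quotient.mk I (MvPolynomial.X i))) := by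
        rw [Algebra.TensorProduct.tmul_mul_tmul, mul_one, _root_.map_mul]
      rw [e1, e2]
      ring
    · intro j
      have hX : s (MvPolynomial.X i ⊗ₜ[A] (1 : MvPolynomial (Fin n) A ⧸ I))
          = Ideal.Quotient.mk I (MvPolynomial.X i) := by rw [hs, mul_one]
      have hβ : s ((1 : MvPolynomial (Fin n) A) ⊗ₜ[A] (Ideal.Quotient.mk I p))
          = Ideal.Quotient.mk I p := by rw [hs, map_one, one_mul]
      rw [map_add, _root_.map_mul, hv2 j, hX, apply_ite s, map_zero, hβ,
        MvPolynomial.pderiv_mul, map_add, _root_.map_mul, _root_.map_mul, MvPolynomial.pderiv_X]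
      by_cases hji : j = i
      · subst hji; simp [add_comm]
      · simp [hji, Pi.single_apply, Ne.symm hji]

open RingTheory.Sequence in
open scoped Matrix in
set_option maxHeartbeats 3200000 in
/-- **Tate's trace via the Jacobian.**
Let `A` be a commutative ring and `f₁, …, f_n ∈ A[T₁, …, T_n]` a regular
sequence with `C := A[T]/(f)` finite free over `A`.  Let `γ_i` be the image of
`T_i`, suppose the kernel of `A[T] ⊗_A C → C` is generated by the regular
sequence `g_i = T_i ⊗ 1 − 1 ⊗ γ_i`, let `λ` be Tate's trace (`λ = t⁻¹(1)` for
Tate's isomorphism `t`), and let `J ∈ C` be the image of the Jacobian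
`det(∂f_i/∂T_j)`.  Then `tr_{C/A}(c) = λ(J·c)` for all `c`. -/
theorem tate_trace_jacobian
    (A : Type*) [CommRing A]
    (n : ℕ) (f : Fin n → MvPolynomial (Fin n) A)
    (hf : RingTheory.Sequence.IsRegular (MvPolynomial (Fin n) A) (List.ofFn f))
    (I : Ideal (MvPolynomial (Fin n) A)) (hI : I = Ideal.span (Set.range f))
    [Module.Finite A (MvPolynomial (Fin n) A ⧸ I)]
    [Module.Free A (MvPolynomial (Fin n) A ⧸ I)]
    (s : (MvPolynomial (Fin n) A) ⊗[A] (MvPolynomial (Fin n) A ⧸ I) →ₐ[A]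
      (MvPolynomial (Fin n) A ⧸ I))
    (hs : ∀ (b : MvPolynomial (Fin n) A) (c : MvPolynomial (Fin n) A ⧸ I),
      s (b ⊗ₜ c) = Ideal.Quotient.mk I b * c)
    -- the diagonal generators `g_i = T_i ⊗ 1 − 1 ⊗ γ_i`
    (g : Fin n → (MvPolynomial (Fin n) A) ⊗[A] (MvPolynomial (Fin n) A ⧸ I))
    (hgdef : ∀ i, g i =
      (MvPolynomial.X i) ⊗ₜ[A] (1 : MvPolynomial (Fin n) A ⧸ I) -
        (1 : MvPolynomial (Fin n) A) ⊗ₜ[A] (Ideal.Quotient.mk I (MvPolynomial.X i)))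
    (hg : RingTheory.Sequence.IsRegular
      ((MvPolynomial (Fin n) A) ⊗[A] (MvPolynomial (Fin n) A ⧸ I)) (List.ofFn g))
    (hJ : RingHom.ker s = Ideal.span (Set.range g))
    (h : Matrix (Fin n) (Fin n) ((MvPolynomial (Fin n) A) ⊗[A] (MvPolynomial (Fin n) A ⧸ I)))
    (hh : ∀ i, (f i) ⊗ₜ[A] (1 : MvPolynomial (Fin n) A ⧸ I) = ∑ j, h i j * g j)
    (Δbar : (MvPolynomial (Fin n) A ⧸ I) ⊗[A] (MvPolynomial (Fin n) A ⧸ I))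
    (hΔbar : Δbar =
      (Algebra.TensorProduct.map (Ideal.Quotient.mkₐ A I)
        (AlgHom.id A (MvPolynomial (Fin n) A ⧸ I))) h.det)
    (T : ((MvPolynomial (Fin n) A ⧸ I) →ₗ[A] A) → (MvPolynomial (Fin n) A ⧸ I))
    (hT : ∀ φ, T φ = TensorProduct.lift
      (((LinearMap.lsmul A (MvPolynomial (Fin n) A ⧸ I)).comp φ).flip) Δbar)
    (lam : (MvPolynomial (Fin n) A ⧸ I) →ₗ[A] A) (hlam : T lam = 1)
    (c : MvPolynomial (Fin n) A ⧸ I) :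
    LinearMap.trace A (MvPolynomial (Fin n) A ⧸ I)
        (LinearMap.mul A (MvPolynomial (Fin n) A ⧸ I) c) =
      lam (Ideal.Quotient.mk I
        (Matrix.det (Matrix.of fun i j => MvPolynomial.pderiv j (f i))) * c) := by
  set π : (MvPolynomial (Fin n) A ⊗[A] (MvPolynomial (Fin n) A ⧸ I)) →ₐ[A] ((MvPolynomial (Fin n) A ⧸ I) ⊗[A] (MvPolynomial (Fin n) A ⧸ I)) :=
    Algebra.TensorProduct.map (Ideal.Quotient.mkₐ A I) (AlgHom.id A (MvPolynomial (Fin n) A ⧸ I)) with hπ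
  set m : ((MvPolynomial (Fin n) A ⧸ I) ⊗[A] (MvPolynomial (Fin n) A ⧸ I)) →ₐ[A] (MvPolynomial (Fin n) A ⧸ I) := Algebra.TensorProduct.lmul' A with hm
  -- Step 0 : m ∘ π = s
  have hms : ∀ z : (MvPolynomial (Fin n) A ⊗[A] (MvPolynomial (Fin n) A ⧸ I)), m (π z) = s z := by
    intro z
    induction z using TensorProduct.induction_on with
    | zero => simp
    | tmul b cc =>
      rw [hπ, hm, Algebra.TensorProduct.map_tmul, Ideal.Quotient.mkₐ_eq_mk,
        AlgHom.id_apply, Algebra.TensorProduct.lmul'_apply_tmul, hs]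
    | add z w hz hw => rw [map_add, map_add, map_add, hz, hw]
  -- Step 1 : the Jacobian computation
  have htay := fun i => tate_taylor A n I s hs g hgdef (f i)
  choose v hv1 hv2 using htay
  have hfI : ∀ i, Ideal.Quotient.mk I (f i) = 0 := by
    intro i
    rw [Ideal.Quotient.eq_zero_iff_mem, hI]
    exact Ideal.subset_span ⟨i, rfl⟩
  have hv1' : ∀ i, (f i) ⊗ₜ[A] (1 : (MvPolynomial (Fin n) A ⧸ I)) = ∑ j, v i j * g j := by
    intro i
    have h0 := hv1 i
    rwa [hfI i, TensorProduct.tmul_zero, sub_zero] at h0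
  have hdetker : h.det - (Matrix.of v).det ∈ RingHom.ker s := by
    rw [hJ]
    exact tate_det_sub_mem g hg.toIsWeaklyRegular h (Matrix.of v)
      (fun i => (hh i).symm.trans (hv1' i))
  have hsdet : s h.det = s (Matrix.of v).det := by
    have h0 := RingHom.mem_ker.mp hdetker
    rw [map_sub, sub_eq_zero] at h0
    exact h0
  have hJac : s h.det = Ideal.Quotient.mk I
      (Matrix.det (Matrix.of fun i j => MvPolynomial.pderiv j (f i))) := by
    have e2 : s.toRingHom.mapMatrix (Matrix.of v)
        = (Ideal.Quotient.mk I).mapMatrix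
            (Matrix.of fun i j => MvPolynomial.pderiv j (f i)) := by
      ext i j
      simp only [RingHom.mapMatrix_apply, Matrix.map_apply, Matrix.of_apply]
      exact hv2 i j
    calc s h.det = s (Matrix.of v).det := hsdet
      _ = s.toRingHom (Matrix.of v).det := rfl
      _ = (s.toRingHom.mapMatrix (Matrix.of v)).det := by
          with_unfolding_all exact RingHom.map_det s.toRingHom (Matrix.of v)
      _ = ((Ideal.Quotient.mk I).mapMatrix
            (Matrix.of fun i j => MvPolynomial.pderiv j (f i))).det := by rw [e2]
      _ = Ideal.Quotient.mk I
            (Matrix.det (Matrix.of fun i j => MvPolynomial.pderiv j (f i))) :=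
          (RingHom.map_det _ _).symm
  -- Step 2 : diagonal property
  have hcram : ∀ i, h.det * g i = ∑ k, h.adjugate i k * ((f k) ⊗ₜ[A] (1 : (MvPolynomial (Fin n) A ⧸ I))) := by
    intro i
    have hgv : h *ᵥ g = fun k => (f k) ⊗ₜ[A] (1 : (MvPolynomial (Fin n) A ⧸ I)) := by
      funext k
      show ∑ j, h k j * g j = _
      exact (hh k).symm
    have h2 : h.adjugate *ᵥ (h *ᵥ g) = h.det • g := by
      have e1 := Matrix.mulVec_mulVec g h.adjugate h
      haveI : IsScalarTower ((MvPolynomial (Fin n) A) ⊗[A] (MvPolynomial (Fin n) A ⧸ I))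
          ((MvPolynomial (Fin n) A) ⊗[A] (MvPolynomial (Fin n) A ⧸ I))
          ((MvPolynomial (Fin n) A) ⊗[A] (MvPolynomial (Fin n) A ⧸ I)) :=
        ⟨fun x y z => by simp only [smul_eq_mul]; exact mul_assoc x y z⟩
      have e2 := Matrix.smul_mulVec h.det
        (1 : Matrix (Fin n) (Fin n)
          ((MvPolynomial (Fin n) A) ⊗[A] (MvPolynomial (Fin n) A ⧸ I))) g
      have e3 := Matrix.one_mulVec g
      rw [e1, Matrix.adjugate_mul, e2, e3]
    have h3 : (h.adjugate *ᵥ (h *ᵥ g)) i = ∑ k, h.adjugate i k * ((f k) ⊗ₜ[A] (1 : (MvPolynomial (Fin n) A ⧸ I))) := by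
      rw [hgv]
      rfl
    rw [h2] at h3
    rw [← h3]
    rfl
  have hkill : ∀ i, π (g i) * Δbar = 0 := by
    intro i
    have h0 : π (h.det * g i) = Δbar * π (g i) := by
      rw [_root_.map_mul, ← hΔbar]
    have h1 : π (h.det * g i) = 0 := by
      rw [hcram i, map_sum]
      apply Finset.sum_eq_zero
      intro k _
      rw [_root_.map_mul]
      have hz : π ((f k) ⊗ₜ[A] (1 : (MvPolynomial (Fin n) A ⧸ I))) = 0 := by
        rw [hπ, Algebra.TensorProduct.map_tmul, Ideal.Quotient.mkₐ_eq_mk, hfI k,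
          TensorProduct.zero_tmul]
      rw [hz]
      ring
    have h2 : Δbar * π (g i) = 0 := by rw [← h0]; exact h1
    linear_combination h2
  have hπg : ∀ i, π (g i) = (Ideal.Quotient.mk I (MvPolynomial.X i)) ⊗ₜ[A] (1 : (MvPolynomial (Fin n) A ⧸ I))
      - (1 : (MvPolynomial (Fin n) A ⧸ I)) ⊗ₜ[A] (Ideal.Quotient.mk I (MvPolynomial.X i)) := by
    intro i
    rw [hgdef i, map_sub]
    simp [hπ]
  have hdiagX : ∀ i, ((Ideal.Quotient.mk I (MvPolynomial.X i)) ⊗ₜ[A] (1 : (MvPolynomial (Fin n) A ⧸ I))) * Δbar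
      = ((1 : (MvPolynomial (Fin n) A ⧸ I)) ⊗ₜ[A] (Ideal.Quotient.mk I (MvPolynomial.X i))) * Δbar := by
    intro i
    have h2 := hkill i
    rw [hπg i] at h2
    linear_combination h2
  have hdiag : ∀ x : (MvPolynomial (Fin n) A ⧸ I), (x ⊗ₜ[A] (1 : (MvPolynomial (Fin n) A ⧸ I))) * Δbar = ((1 : (MvPolynomial (Fin n) A ⧸ I)) ⊗ₜ[A] x) * Δbar := by
    intro x
    obtain ⟨b, rfl⟩ := Ideal.Quotient.mk_surjective x
    induction b using MvPolynomial.induction_on with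
    | C a =>
      have r : Ideal.Quotient.mk I (MvPolynomial.C a) = a • (1 : (MvPolynomial (Fin n) A ⧸ I)) := by
        rw [← Algebra.algebraMap_eq_smul_one]; rfl
      rw [r, TensorProduct.smul_tmul]
    | add p q hp hq =>
      rw [map_add, TensorProduct.add_tmul, TensorProduct.tmul_add]
      linear_combination hp + hq
    | mul_X p i hp =>
      have e1 : Ideal.Quotient.mk I (p * MvPolynomial.X i) ⊗ₜ[A] (1 : (MvPolynomial (Fin n) A ⧸ I))
          = (Ideal.Quotient.mk I p ⊗ₜ[A] (1 : (MvPolynomial (Fin n) A ⧸ I))) *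
            (Ideal.Quotient.mk I (MvPolynomial.X i) ⊗ₜ[A] (1 : (MvPolynomial (Fin n) A ⧸ I))) := by
        rw [Algebra.TensorProduct.tmul_mul_tmul, mul_one, ← _root_.map_mul]
      have e2 : (1 : (MvPolynomial (Fin n) A ⧸ I)) ⊗ₜ[A] Ideal.Quotient.mk I (p * MvPolynomial.X i)
          = ((1 : (MvPolynomial (Fin n) A ⧸ I)) ⊗ₜ[A] Ideal.Quotient.mk I p) *
            ((1 : (MvPolynomial (Fin n) A ⧸ I)) ⊗ₜ[A] Ideal.Quotient.mk I (MvPolynomial.X i)) := by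
        rw [Algebra.TensorProduct.tmul_mul_tmul, mul_one, ← _root_.map_mul]
      rw [e1, e2]
      linear_combination (Ideal.Quotient.mk I (MvPolynomial.X i) ⊗ₜ[A] (1 : (MvPolynomial (Fin n) A ⧸ I))) * hp
        + ((1 : (MvPolynomial (Fin n) A ⧸ I)) ⊗ₜ[A] Ideal.Quotient.mk I p) * hdiagX i
  -- Step 3 : the trace computation
  set ν : ((MvPolynomial (Fin n) A ⧸ I) ⊗[A] (MvPolynomial (Fin n) A ⧸ I)) →ₗ[A] (MvPolynomial (Fin n) A ⧸ I) :=
    TensorProduct.lift (((LinearMap.lsmul A (MvPolynomial (Fin n) A ⧸ I)).comp lam).flip) with hν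
  have hνt : ∀ (x y : (MvPolynomial (Fin n) A ⧸ I)), ν (x ⊗ₜ[A] y) = lam y • x := by
    intro x y
    rw [hν, TensorProduct.lift.tmul]
    rfl
  have hν1 : ν Δbar = 1 := by
    rw [hν, ← hT lam]
    exact hlam
  have hmulL : ∀ (x : (MvPolynomial (Fin n) A ⧸ I)) (z : ((MvPolynomial (Fin n) A ⧸ I) ⊗[A] (MvPolynomial (Fin n) A ⧸ I))), ν ((x ⊗ₜ[A] (1 : (MvPolynomial (Fin n) A ⧸ I))) * z) = x * ν z := by
    intro x z
    induction z using TensorProduct.induction_on with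
    | zero =>
      have h00 : (x ⊗ₜ[A] (1 : (MvPolynomial (Fin n) A ⧸ I))) * (0 : ((MvPolynomial (Fin n) A ⧸ I) ⊗[A] (MvPolynomial (Fin n) A ⧸ I))) = 0 := by ring
      rw [h00, show ν (0 : ((MvPolynomial (Fin n) A ⧸ I) ⊗[A] (MvPolynomial (Fin n) A ⧸ I))) = 0 from map_zero ν]
      exact (mul_zero x).symm
    | tmul a b =>
      rw [Algebra.TensorProduct.tmul_mul_tmul, one_mul, hνt, hνt]
      exact (mul_smul_comm _ _ _).symm
    | add z w hz hw =>
      have hd : (x ⊗ₜ[A] (1 : (MvPolynomial (Fin n) A ⧸ I))) * (z + w)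
          = (x ⊗ₜ[A] (1 : (MvPolynomial (Fin n) A ⧸ I))) * z + (x ⊗ₜ[A] (1 : (MvPolynomial (Fin n) A ⧸ I))) * w := by ring
      rw [hd, map_add, hz, hw, map_add, mul_add]
  have hstar : ∀ d : (MvPolynomial (Fin n) A ⧸ I), ν (((1 : (MvPolynomial (Fin n) A ⧸ I)) ⊗ₜ[A] d) * Δbar) = d := by
    intro d
    rw [← hdiag d, hmulL, hν1, mul_one]
  have htrE : ∀ w : ((MvPolynomial (Fin n) A ⧸ I) ⊗[A] (MvPolynomial (Fin n) A ⧸ I)),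
      LinearMap.trace A (MvPolynomial (Fin n) A ⧸ I) (ν ∘ₗ LinearMap.mulLeft A w ∘ₗ TensorProduct.mk A (MvPolynomial (Fin n) A ⧸ I) (MvPolynomial (Fin n) A ⧸ I) 1)
        = lam (m w) := by
    intro w
    induction w using TensorProduct.induction_on with
    | zero =>
      have hz : ν ∘ₗ LinearMap.mulLeft A (0 : ((MvPolynomial (Fin n) A ⧸ I) ⊗[A] (MvPolynomial (Fin n) A ⧸ I))) ∘ₗ TensorProduct.mk A (MvPolynomial (Fin n) A ⧸ I) (MvPolynomial (Fin n) A ⧸ I) 1 = 0 := by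
        ext d
        simp only [LinearMap.coe_comp, Function.comp_apply, TensorProduct.mk_apply,
          LinearMap.mulLeft_apply, LinearMap.zero_apply]
        have h00 : (0 : ((MvPolynomial (Fin n) A ⧸ I) ⊗[A] (MvPolynomial (Fin n) A ⧸ I))) * ((1 : (MvPolynomial (Fin n) A ⧸ I)) ⊗ₜ[A] d) = 0 := by ring
        rw [h00, map_zero]
      rw [hz]
      simp
    | tmul x y =>
      have hx : ν ∘ₗ LinearMap.mulLeft A (x ⊗ₜ[A] y) ∘ₗ TensorProduct.mk A (MvPolynomial (Fin n) A ⧸ I) (MvPolynomial (Fin n) A ⧸ I) 1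
          = dualTensorHom A (MvPolynomial (Fin n) A ⧸ I) (MvPolynomial (Fin n) A ⧸ I) ((lam ∘ₗ LinearMap.mulLeft A y) ⊗ₜ[A] x) := by
        ext d
        simp only [LinearMap.coe_comp, Function.comp_apply, TensorProduct.mk_apply,
          LinearMap.mulLeft_apply, dualTensorHom_apply]
        rw [Algebra.TensorProduct.tmul_mul_tmul, mul_one, hνt]
      rw [hx]
      have htr : LinearMap.trace A (MvPolynomial (Fin n) A ⧸ I)
          (dualTensorHom A (MvPolynomial (Fin n) A ⧸ I) (MvPolynomial (Fin n) A ⧸ I)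
            ((lam ∘ₗ LinearMap.mulLeft A y) ⊗ₜ[A] x)) = lam (y * x) := by
        have h0 := DFunLike.congr_fun
          (LinearMap.trace_eq_contract A (MvPolynomial (Fin n) A ⧸ I))
          ((lam ∘ₗ LinearMap.mulLeft A y) ⊗ₜ[A] x)
        simpa using h0
      rw [htr, hm, Algebra.TensorProduct.lmul'_apply_tmul, mul_comm]
    | add z w hz hw =>
      have hadd : LinearMap.mulLeft A (z + w)
          = LinearMap.mulLeft A z + LinearMap.mulLeft A w := by
        apply LinearMap.ext
        intro u
        simp only [LinearMap.mulLeft_apply, LinearMap.add_apply]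
        ring
      rw [hadd, LinearMap.add_comp, LinearMap.comp_add, map_add, hz, hw, map_add, map_add]
  have hkey : LinearMap.mul A (MvPolynomial (Fin n) A ⧸ I) c
      = ν ∘ₗ LinearMap.mulLeft A (((1 : (MvPolynomial (Fin n) A ⧸ I)) ⊗ₜ[A] c) * Δbar) ∘ₗ TensorProduct.mk A (MvPolynomial (Fin n) A ⧸ I) (MvPolynomial (Fin n) A ⧸ I) 1 := by
    apply LinearMap.ext
    intro d
    have e0 : ((1 : (MvPolynomial (Fin n) A ⧸ I)) ⊗ₜ[A] c) * ((1 : (MvPolynomial (Fin n) A ⧸ I)) ⊗ₜ[A] d) = ((1 : (MvPolynomial (Fin n) A ⧸ I)) ⊗ₜ[A] (c * d)) := by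
      rw [Algebra.TensorProduct.tmul_mul_tmul, one_mul]
    have e : (((1 : (MvPolynomial (Fin n) A ⧸ I)) ⊗ₜ[A] c) * Δbar) * ((1 : (MvPolynomial (Fin n) A ⧸ I)) ⊗ₜ[A] d)
        = ((1 : (MvPolynomial (Fin n) A ⧸ I)) ⊗ₜ[A] (c * d)) * Δbar := by
      calc (((1 : (MvPolynomial (Fin n) A ⧸ I)) ⊗ₜ[A] c) * Δbar) * ((1 : (MvPolynomial (Fin n) A ⧸ I)) ⊗ₜ[A] d)
          = (((1 : (MvPolynomial (Fin n) A ⧸ I)) ⊗ₜ[A] c) * ((1 : (MvPolynomial (Fin n) A ⧸ I)) ⊗ₜ[A] d)) * Δbar := by ring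
        _ = ((1 : (MvPolynomial (Fin n) A ⧸ I)) ⊗ₜ[A] (c * d)) * Δbar := by rw [e0]
    show c * d = ν ((((1 : (MvPolynomial (Fin n) A ⧸ I)) ⊗ₜ[A] c) * Δbar) * ((1 : (MvPolynomial (Fin n) A ⧸ I)) ⊗ₜ[A] d))
    rw [e, hstar]
  rw [hkey, htrE]
  have hfin : m (((1 : (MvPolynomial (Fin n) A ⧸ I)) ⊗ₜ[A] c) * Δbar)
      = Ideal.Quotient.mk I
          (Matrix.det (Matrix.of fun i j => MvPolynomial.pderiv j (f i))) * c := by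
    rw [_root_.map_mul]
    have h1 : m ((1 : (MvPolynomial (Fin n) A ⧸ I)) ⊗ₜ[A] c) = c := by
      rw [hm, Algebra.TensorProduct.lmul'_apply_tmul, one_mul]
    have h2 : m Δbar = Ideal.Quotient.mk I
        (Matrix.det (Matrix.of fun i j => MvPolynomial.pderiv j (f i))) := by
      rw [hΔbar]
      exact (hms h.det).trans hJac
    rw [h1, h2, mul_comm]
  rw [hfin]
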